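/- Let M be an ℋ-module with C_I = 0 and C_{LI} = c ≠ 0, and let v satisfy L(n)v = I(n)v = 0 for n > 0, L(0)v = −(1/2)·v, I(0)v = 0. Then w = (L(−1) + I(−1)/(2c))·(L(−1) − I(−1)/(2c))·v satisfies L(n)w = I(n)w = 0 for all n > 0, i.e., w is a singular vector of weight 3/2. (This is the r = 2, p = 1 case of the product formula for the singular vector v_r⁻ in V^ℋ((1−r)/2, 0).) -/

import Mathlib

/-- Let M be an ℋ-module with C_I acting as 0 and C_{LI} acting as c ≠ 0, and let v be a
highest weight vector with L(0)v = −(1/2)·v, I(0)v = 0. Then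
w = (L(−1) + I(−1)/(2c))(L(−1) − I(−1)/(2c))v is a singular vector:
L(n)w = I(n)w = 0 for all n > 0 (the r = 2, p = 1 case of the product formula). -/
theorem singular_vector_r_two
    {M : Type*} [AddCommGroup M] [Module ℂ M]
    (L I : ℤ → Module.End ℂ M) (CL : Module.End ℂ M) (c : ℂ) (hc : c ≠ 0)
    (hLL : ∀ n m : ℤ, ⁅L n, L m⁆ =
      ((n - m : ℤ) : ℂ) • L (n + m) +
        (if n = -m then (((n : ℂ) ^ 3 - (n : ℂ)) / 12) • CL else 0))
    (hLI : ∀ n m : ℤ, ⁅L n, I m⁆ =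
      (-(m : ℂ)) • I (n + m) +
        (if n = -m then (-(((n : ℂ) ^ 2 + (n : ℂ)) * c)) • (1 : Module.End ℂ M) else 0))
    (hII : ∀ n m : ℤ, ⁅I n, I m⁆ = 0)
    (v : M)
    (hv : ∀ n : ℤ, 0 < n → L n v = 0 ∧ I n v = 0)
    (hL0 : L 0 v = (-(1 / 2) : ℂ) • v) (hI0 : I 0 v = 0) :
    ∀ n : ℤ, 0 < n →
      L n ((L (-1) + (1 / (2 * c)) • I (-1)) ((L (-1) - (1 / (2 * c)) • I (-1)) v)) = 0 ∧
      I n ((L (-1) + (1 / (2 * c)) • I (-1)) ((L (-1) - (1 / (2 * c)) • I (-1)) v)) = 0 := by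
  have key : ∀ (f g : Module.End ℂ M) (x : M), f (g x) = ⁅f, g⁆ x + g (f x) := by
    intro f g x
    simp [Ring.lie_def]
  have appLL : ∀ (n m : ℤ) (x : M), L n (L m x) =
      ((n - m : ℤ) : ℂ) • L (n + m) x
        + (if n = -m then (((n : ℂ) ^ 3 - (n : ℂ)) / 12) • CL x else 0)
        + L m (L n x) := by
    intro n m x
    rw [key, hLL]
    split_ifs <;> simp
  have appLI : ∀ (n m : ℤ) (x : M), L n (I m x) =
      (-(m : ℂ)) • I (n + m) x
        + (if n = -m then (-(((n : ℂ) ^ 2 + (n : ℂ)) * c)) • x else 0)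
        + I m (L n x) := by
    intro n m x
    rw [key, hLI]
    split_ifs <;> simp
  have appIL : ∀ (n m : ℤ) (x : M), I n (L m x) =
      (n : ℂ) • I (m + n) x
        + (if m = -n then ((((m : ℂ) ^ 2 + (m : ℂ)) * c)) • x else 0)
        + L m (I n x) := by
    intro n m x
    rw [key, show ⁅I n, L m⁆ = -⁅L m, I n⁆ by rw [Ring.lie_def, Ring.lie_def]; abel, hLI]
    split_ifs <;> simp <;> abel
  have appII : ∀ (n m : ℤ) (x : M), I n (I m x) = I m (I n x) := by
    intro n m x
    rw [key, hII]
    simp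
  have hLv : ∀ m : ℤ, 0 < m → L m v = 0 := fun m hm => (hv m hm).1
  have hIv : ∀ m : ℤ, 0 ≤ m → I m v = 0 := by
    intro m hm
    rcases hm.eq_or_lt with h | h
    · rw [← h]; exact hI0
    · exact (hv m h).2
  set a : ℂ := 1 / (2 * c) with ha
  have hac : a * (2 * c) = 1 := by rw [ha]; exact one_div_mul_cancel (mul_ne_zero two_ne_zero hc)
  set u : M := L (-1) v - a • I (-1) v with hu
  have hBv : (L (-1) - a • I (-1)) v = u := by simp [hu]
  -- I m u = 0 for m ≥ 0
  have hIu : ∀ m : ℤ, 0 ≤ m → I m u = 0 := by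
    intro m hm
    have h1 : I m (L (-1) v) = 0 := by
      rw [appIL]
      rcases hm.eq_or_lt with h | h
      · rw [← h]; simp [hI0]
      · have h9 : (0:ℤ) ≤ -1 + m := by omega
        rw [hIv m hm, hIv (-1 + m) h9]
        split_ifs <;> norm_num
    have h2 : I m (I (-1) v) = 0 := by
      rw [appII, hIv m hm, map_zero]
    rw [hu, map_sub, map_smul, h1, h2]
    simp
  -- L n u = 0 for n > 0
  have hLu : ∀ n : ℤ, 0 < n → L n u = 0 := by
    intro n hn
    have h1 := appLL n (-1) v
    have h2 := appLI n (-1) v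
    rw [hLv n hn, map_zero, add_zero] at h1
    rw [hLv n hn, map_zero, add_zero] at h2
    rcases (show (1:ℤ) ≤ n from hn).eq_or_lt with h | h
    · subst h
      have e1 : L 1 (L (-1) v) = -v := by
        rw [h1]
        norm_num [hL0, smul_smul]
      have e2 : L 1 (I (-1) v) = (-(2*c)) • v := by
        rw [h2]
        norm_num [hI0]
      rw [hu, map_sub, map_smul, e1, e2, smul_smul]
      rw [show a * -(2*c) = -1 by rw [mul_neg, hac]]
      simp
    · have h8 : n ≠ (1:ℤ) := by omega
      have e1 : L n (L (-1) v) = 0 := by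
        rw [h1, hLv (n + -1) (by omega)]
        simp [h8]
      have e2 : L n (I (-1) v) = 0 := by
        rw [h2, hIv (n + -1) (by omega)]
        simp [h8]
      rw [hu, map_sub, map_smul, e1, e2]
      simp
  -- L 0 u = (1/2) u
  have hL0u : L 0 u = (1/2 : ℂ) • u := by
    have e1 : L 0 (L (-1) v) = (1/2 : ℂ) • L (-1) v := by
      rw [appLL, hL0]
      norm_num
      module
    have e2 : L 0 (I (-1) v) = (1/2 : ℂ) • I (-1) v := by
      rw [appLI, hL0]
      norm_num
      module
    rw [hu, map_sub, map_smul, e1, e2, smul_sub, smul_comm]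
  -- now the main goal
  intro n hn
  have hw : (L (-1) + a • I (-1)) ((L (-1) - a • I (-1)) v) = L (-1) u + a • I (-1) u := by
    rw [hBv]; simp
  rw [hw]
  constructor
  · rw [map_add, map_smul]
    have h1 := appLL n (-1) u
    have h2 := appLI n (-1) u
    rw [hLu n hn, map_zero, add_zero] at h1
    rw [hLu n hn, map_zero, add_zero] at h2
    rcases (show (1:ℤ) ≤ n from hn).eq_or_lt with h | h
    · subst h
      have e1 : L 1 (L (-1) u) = u := by
        rw [h1]
        norm_num [hL0u, smul_smul]
      have e2 : L 1 (I (-1) u) = (-(2*c)) • u := by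
        rw [h2]
        norm_num [hIu 0 le_rfl]
      rw [e1, e2, smul_smul, show a * -(2*c) = -1 by rw [mul_neg, hac]]
      simp
    · have h9 : (0:ℤ) < n + -1 := by omega
      have h8 : n ≠ (1:ℤ) := by omega
      have e1 : L n (L (-1) u) = 0 := by
        rw [h1, hLu (n + -1) h9]
        simp [h8]
      have e2 : L n (I (-1) u) = 0 := by
        rw [h2, hIu (n + -1) h9.le]
        simp [h8]
      rw [e1, e2]
      simp
  · rw [map_add, map_smul]
    have e1 : I n (L (-1) u) = 0 := by
      have h9 : (0:ℤ) ≤ -1 + n := by omega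
      rw [appIL, hIu n hn.le, hIu (-1 + n) h9, map_zero]
      split_ifs <;> norm_num
    have e2 : I n (I (-1) u) = 0 := by
      rw [appII, hIu n hn.le, map_zero]
    rw [e1, e2]
    simp
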